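/- Let φ(t) be a real polynomial of degree 2m (with m > 1) with distinct roots and no repeated factors. The number of ordered pairs (g, h) of monic complex polynomials of degree m each with φ = g·h, such that not both g and h are real polynomials, is divisible by 4. -/

import Mathlib

open Polynomial

/-- A complex polynomial has all real coefficients. -/
def IsRealPoly (g : Polynomial ℂ) : Prop := ∀ i, (g.coeff i).im = 0

namespace NonrealFact
noncomputable section

open Multiset in
/-- If two commuting fixed-point-free involutions on a finset have fixed-point-free
composition, the cardinality is divisible by 4. -/
lemma quad_card {α : Type*} [DecidableEq α] (f g : α → α) (s : Finset α) :
    (∀ x ∈ s, f x ∈ s) → (∀ x ∈ s, g x ∈ s) →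
    (∀ x ∈ s, f (f x) = x) → (∀ x ∈ s, g (g x) = x) →
    (∀ x ∈ s, f (g x) = g (f x)) →
    (∀ x ∈ s, f x ≠ x) → (∀ x ∈ s, g x ≠ x) → (∀ x ∈ s, f (g x) ≠ x) →
    4 ∣ s.card := by
  induction s using Finset.strongInduction with
  | _ s ih =>
    intro hfs hgs hff hgg hcomm hf1 hg1 hfg1
    rcases s.eq_empty_or_nonempty with rfl | ⟨x, hx⟩
    · simp
    have hfx := hfs x hx
    have hgx := hgs x hx
    have hfgx := hfs _ hgx
    have d1 : f x ≠ x := hf1 x hx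
    have d2 : g x ≠ x := hg1 x hx
    have d3 : f (g x) ≠ x := hfg1 x hx
    have d4 : g x ≠ f x := fun h => d3 (by rw [h, hff x hx])
    have d5 : f (g x) ≠ f x := fun h => d2 (by
      have h2 := congrArg f h
      rwa [hff _ hgx, hff _ hx] at h2)
    have d6 : f (g x) ≠ g x := hf1 _ hgx
    set q : Finset α := {x, f x, g x, f (g x)} with hq
    have hqs : q ⊆ s := by
      intro y hy
      simp only [hq, Finset.mem_insert, Finset.mem_singleton] at hy
      rcases hy with rfl | rfl | rfl | rfl <;> assumption
    have hcard : q.card = 4 := by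
      rw [hq]
      rw [Finset.card_insert_of_notMem (by
        simp only [Finset.mem_insert, Finset.mem_singleton]
        push_neg
        exact ⟨Ne.symm d1, Ne.symm d2, Ne.symm d3⟩)]
      rw [Finset.card_insert_of_notMem (by
        simp only [Finset.mem_insert, Finset.mem_singleton]
        push_neg
        exact ⟨Ne.symm d4, Ne.symm d5⟩)]
      rw [Finset.card_insert_of_notMem (Finset.notMem_singleton.mpr (Ne.symm d6))]
      rfl
    have hmemq : ∀ y : α, y = x ∨ y = f x ∨ y = g x ∨ y = f (g x) → y ∈ q := by
      intro y hy
      simp only [hq, Finset.mem_insert, Finset.mem_singleton]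
      exact hy
    have key : ∀ y ∈ s \ q, f y ∈ s \ q ∧ g y ∈ s \ q := by
      intro y hy
      rw [Finset.mem_sdiff] at hy
      obtain ⟨hys, hyq⟩ := hy
      constructor
      · rw [Finset.mem_sdiff]
        refine ⟨hfs y hys, fun h => hyq ?_⟩
        simp only [hq, Finset.mem_insert, Finset.mem_singleton] at h
        apply hmemq
        rcases h with h | h | h | h
        · right; left; rw [← hff y hys, h]
        · left; rw [← hff y hys, h, hff x hx]
        · right; right; right; rw [← hff y hys, h]
        · right; right; left; rw [← hff y hys, h, hff _ hgx]
      · rw [Finset.mem_sdiff]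
        refine ⟨hgs y hys, fun h => hyq ?_⟩
        simp only [hq, Finset.mem_insert, Finset.mem_singleton] at h
        apply hmemq
        rcases h with h | h | h | h
        · right; right; left; rw [← hgg y hys, h]
        · right; right; right; rw [← hgg y hys, h, hcomm x hx]
        · left; rw [← hgg y hys, h, hgg x hx]
        · right; left
          rw [← hgg y hys, h, hcomm x hx, hgg _ hfx]
    have hsub : ∀ y ∈ s \ q, y ∈ s := fun y hy => (Finset.mem_sdiff.mp hy).1
    have hdvd : 4 ∣ (s \ q).card := by
      refine ih (s \ q) (Finset.sdiff_ssubset hqs ⟨x, by simp [hq]⟩) ?_ ?_ ?_ ?_ ?_ ?_ ?_ ?_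
      · exact fun y hy => (key y hy).1
      · exact fun y hy => (key y hy).2
      · exact fun y hy => hff y (hsub y hy)
      · exact fun y hy => hgg y (hsub y hy)
      · exact fun y hy => hcomm y (hsub y hy)
      · exact fun y hy => hf1 y (hsub y hy)
      · exact fun y hy => hg1 y (hsub y hy)
      · exact fun y hy => hfg1 y (hsub y hy)
    have hc : (s \ q).card = s.card - 4 := by rw [Finset.card_sdiff_of_subset hqs, hcard]
    have hle : 4 ≤ s.card := hcard ▸ Finset.card_le_card hqs
    obtain ⟨k, hk⟩ := hdvd
    exact ⟨k + 1, by omega⟩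


local notation "c" => starRingEnd ℂ

/-- Coefficientwise conjugation of a complex polynomial. -/
def cj (q : Polynomial ℂ) : Polynomial ℂ := q.map (starRingEnd ℂ)

lemma cj_cj (q : Polynomial ℂ) : cj (cj q) = q := by
  rw [cj, cj, Polynomial.map_map]
  convert Polynomial.map_id
  exact RingHom.ext fun z => Complex.conj_conj z

lemma cj_inj : Function.Injective cj := fun a b h => by
  rw [← cj_cj a, h, cj_cj]

lemma cj_mul (p q : Polynomial ℂ) : cj (p * q) = cj p * cj q := Polynomial.map_mul _

lemma cj_monic {q : Polynomial ℂ} (h : q.Monic) : (cj q).Monic := h.map _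

lemma cj_natDegree (q : Polynomial ℂ) : (cj q).natDegree = q.natDegree :=
  natDegree_map (starRingEnd ℂ)

lemma splitsC (q : Polynomial ℂ) : q.Splits := IsAlgClosed.splits q

lemma card_roots_eq (q : Polynomial ℂ) : Multiset.card q.roots = q.natDegree :=
  (Polynomial.splits_iff_card_roots).mp (splitsC q)

lemma cj_roots (q : Polynomial ℂ) : (cj q).roots = q.roots.map (starRingEnd ℂ) :=
  (splitsC q).roots_map _

lemma isRealPoly_iff (q : Polynomial ℂ) : IsRealPoly q ↔ cj q = q := by
  constructor
  · intro h
    ext n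
    rw [cj, coeff_map]
    exact Complex.conj_eq_iff_im.mpr (h n)
  · intro h n
    rw [← Complex.conj_eq_iff_im]
    have := congrArg (fun p => Polynomial.coeff p n) h
    simpa [cj] using this

lemma real_cj_iff (q : Polynomial ℂ) : IsRealPoly (cj q) ↔ IsRealPoly q := by
  rw [isRealPoly_iff, isRealPoly_iff]
  exact ⟨fun h => cj_inj h, fun h => congrArg cj h⟩

/-- Monic polynomial with given root multiset. -/
def Pm (s : Multiset ℂ) : Polynomial ℂ := (s.map fun a => X - C a).prod

lemma Pm_monic (s : Multiset ℂ) : (Pm s).Monic :=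
  monic_multiset_prod_of_monic _ _ fun a _ => monic_X_sub_C a

lemma Pm_roots (s : Multiset ℂ) : (Pm s).roots = s := roots_multiset_prod_X_sub_C s

lemma Pm_natDegree (s : Multiset ℂ) : (Pm s).natDegree = Multiset.card s :=
  natDegree_multiset_prod_X_sub_C_eq_card s

lemma Pm_add (s t : Multiset ℂ) : Pm (s + t) = Pm s * Pm t := by
  rw [Pm, Pm, Pm, Multiset.map_add, Multiset.prod_add]

lemma eq_Pm_roots {q : Polynomial ℂ} (hq : q.Monic) : q = Pm q.roots :=
  (splitsC q).eq_prod_roots_of_monic hq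

lemma cj_Pm (s : Multiset ℂ) : cj (Pm s) = Pm (s.map (starRingEnd ℂ)) := by
  have : cj (Pm s) = Pm (cj (Pm s)).roots := eq_Pm_roots (cj_monic (Pm_monic s))
  rw [this, cj_roots, Pm_roots]


lemma cinj : Function.Injective (c) := (starRingEnd ℂ).injective

lemma mem_map_conj {A : Multiset ℂ} {z : ℂ} : z ∈ A.map (c) ↔ (c) z ∈ A := by
  rw [Multiset.mem_map]
  constructor
  · rintro ⟨a, ha, rfl⟩
    simpa using ha
  · intro h
    exact ⟨(c) z, h, by simp⟩

/-- Toggle membership of the pair `{z₀, conj z₀}` in a multiset. -/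
def tog (z₀ : ℂ) (A : Multiset ℂ) : Multiset ℂ :=
  if z₀ ∈ A then ((c) z₀) ::ₘ A.erase z₀ else z₀ ::ₘ A.erase ((c) z₀)

variable {z₀ : ℂ} {A : Multiset ℂ}

lemma cons_add_cons (a b : ℂ) (s t : Multiset ℂ) :
    (a ::ₘ s) + (b ::ₘ t) = (b ::ₘ s) + (a ::ₘ t) := by
  rw [Multiset.cons_add, Multiset.cons_add, Multiset.add_cons, Multiset.add_cons,
    Multiset.cons_swap]

section
variable (hone : (z₀ ∈ A ∧ (c) z₀ ∉ A) ∨ (z₀ ∉ A ∧ (c) z₀ ∈ A))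

include hone

lemma tog_card : Multiset.card (tog z₀ A) = Multiset.card A := by
  rcases hone with ⟨h1, h2⟩ | ⟨h1, h2⟩
  · have := Multiset.card_erase_add_one h1
    rw [tog, if_pos h1, Multiset.card_cons]
    omega
  · have := Multiset.card_erase_add_one h2
    rw [tog, if_neg h1, Multiset.card_cons]
    omega

lemma tog_map_conj : (tog z₀ A).map (c) = tog z₀ (A.map (c)) := by
  rcases hone with ⟨h1, h2⟩ | ⟨h1, h2⟩
  · rw [tog, if_pos h1, Multiset.map_cons, Multiset.map_erase _ cinj, Complex.conj_conj,
      tog, if_neg (by rw [mem_map_conj]; exact h2)]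
  · rw [tog, if_neg h1, Multiset.map_cons, Multiset.map_erase _ cinj, Complex.conj_conj,
      tog, if_pos (by rw [mem_map_conj]; exact h2)]

lemma tog_add_conj : tog z₀ A + (tog z₀ A).map (c) = A + A.map (c) := by
  rcases hone with ⟨h1, h2⟩ | ⟨h1, h2⟩
  · have e1 : (tog z₀ A).map (c) = z₀ ::ₘ (A.map (c)).erase ((c) z₀) := by
      rw [tog, if_pos h1, Multiset.map_cons, Multiset.map_erase _ cinj, Complex.conj_conj]
    have hw : (c) z₀ ∈ A.map (c) := mem_map_conj.mpr (by rwa [Complex.conj_conj])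
    rw [e1, tog, if_pos h1, cons_add_cons, Multiset.cons_erase h1, Multiset.cons_erase hw]
  · have e1 : (tog z₀ A).map (c) = (c) z₀ ::ₘ (A.map (c)).erase z₀ := by
      rw [tog, if_neg h1, Multiset.map_cons, Multiset.map_erase _ cinj, Complex.conj_conj]
    have hw : z₀ ∈ A.map (c) := mem_map_conj.mpr h2
    rw [e1, tog, if_neg h1, cons_add_cons, Multiset.cons_erase h2, Multiset.cons_erase hw]

variable (hne : (c) z₀ ≠ z₀) (hA : A.Nodup)
include hne hA

lemma tog_mem_z₀ : z₀ ∈ tog z₀ A ↔ z₀ ∉ A := by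
  rcases hone with ⟨h1, h2⟩ | ⟨h1, h2⟩
  · rw [tog, if_pos h1]
    simp only [Multiset.mem_cons]
    constructor
    · rintro (h | h)
      · exact absurd h.symm hne
      · exact absurd h hA.notMem_erase
    · intro h; exact absurd h1 h
  · rw [tog, if_neg h1]
    simp [h1]

lemma tog_tog : tog z₀ (tog z₀ A) = A := by
  have honer := hone
  rcases hone with ⟨h1, h2⟩ | ⟨h1, h2⟩
  · have hz : z₀ ∉ tog z₀ A := by
      rw [tog_mem_z₀ honer hne hA]; exact not_not_intro h1
    rw [tog, if_neg hz, tog, if_pos h1, Multiset.erase_cons_head, Multiset.cons_erase h1]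
  · have hz : z₀ ∈ tog z₀ A := by
      rw [tog_mem_z₀ honer hne hA]; exact h1
    rw [tog, if_pos hz, tog, if_neg h1, Multiset.erase_cons_head, Multiset.cons_erase h2]

lemma tog_ne : tog z₀ A ≠ A := by
  intro h
  have honer := hone
  rcases hone with ⟨h1, h2⟩ | ⟨h1, h2⟩
  · have hz : z₀ ∉ tog z₀ A := by rw [tog_mem_z₀ honer hne hA]; exact not_not_intro h1
    rw [h] at hz; exact hz h1
  · have hz : z₀ ∈ tog z₀ A := by rw [tog_mem_z₀ honer hne hA]; exact h1
    rw [h] at hz; exact h1 hz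

omit hne hA in
lemma tog_ne_conj (hpair : ∀ z ∈ A, (c) z ∉ A) (hcard : 2 ≤ Multiset.card A) :
    tog z₀ A ≠ A.map (c) := by
  have : ∃ w, w ∈ tog z₀ A ∧ w ∈ A := by
    rcases hone with ⟨h1, h2⟩ | ⟨h1, h2⟩
    · have hc : 0 < Multiset.card (A.erase z₀) := by
        have := Multiset.card_erase_add_one h1; omega
      obtain ⟨w, hw⟩ := Multiset.card_pos_iff_exists_mem.mp hc
      exact ⟨w, by rw [tog, if_pos h1]; exact Multiset.mem_cons_of_mem hw,
        Multiset.mem_of_mem_erase hw⟩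
    · have hc : 0 < Multiset.card (A.erase ((c) z₀)) := by
        have := Multiset.card_erase_add_one h2; omega
      obtain ⟨w, hw⟩ := Multiset.card_pos_iff_exists_mem.mp hc
      exact ⟨w, by rw [tog, if_neg h1]; exact Multiset.mem_cons_of_mem hw,
        Multiset.mem_of_mem_erase hw⟩
  obtain ⟨w, hwt, hwA⟩ := this
  intro h
  rw [h, mem_map_conj] at hwt
  exact hpair ((c) w) hwt (by rwa [Complex.conj_conj])


end


/-- `q` is "half" of a self-conjugate factorization of `Φ`. -/
def Wp (Φ q : Polynomial ℂ) : Prop := q.Monic ∧ Φ = q * cj q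

variable {Φ q : Polynomial ℂ} {m : ℕ} {z₀ : ℂ}

lemma Wp_ne_zero (hΦ : Φ.Monic) (hq : Wp Φ q) : q ≠ 0 := by
  intro h
  exact hΦ.ne_zero (by rw [hq.2, h, zero_mul])

lemma Wp_cj (hq : Wp Φ q) : Wp Φ (cj q) :=
  ⟨cj_monic hq.1, by rw [cj_cj, mul_comm]; exact hq.2⟩

lemma Wp_key (hΦ : Φ.Monic) (hq : Wp Φ q) :
    q.roots + q.roots.map (c) = Φ.roots := by
  rw [hq.2, roots_mul (by rw [← hq.2]; exact hΦ.ne_zero), cj_roots]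

lemma Wp_natDegree (hΦ : Φ.Monic) (hdeg2 : Φ.natDegree = 2 * m) (hq : Wp Φ q) :
    q.natDegree = m := by
  have h0 := Wp_ne_zero hΦ hq
  have h1 : Φ.natDegree = q.natDegree + (cj q).natDegree := by
    rw [hq.2, natDegree_mul h0 (by rw [cj]; exact fun hh => h0 (by
      simpa using (Polynomial.map_eq_zero _).mp hh))]
  rw [cj_natDegree] at h1
  omega

lemma Wp_card_roots (hΦ : Φ.Monic) (hdeg2 : Φ.natDegree = 2 * m) (hq : Wp Φ q) :
    Multiset.card q.roots = m := by
  rw [card_roots_eq, Wp_natDegree hΦ hdeg2 hq]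

lemma Wp_nodup (hΦ : Φ.Monic) (hnd : Φ.roots.Nodup) (hq : Wp Φ q) : q.roots.Nodup :=
  Multiset.nodup_of_le (by rw [← Wp_key hΦ hq]; exact Multiset.le_add_right _ _) hnd

lemma Wp_count (hΦ : Φ.Monic) (hq : Wp Φ q) (z : ℂ) :
    q.roots.count z + q.roots.count ((c) z) = Φ.roots.count z := by
  have h := congrArg (Multiset.count z) (Wp_key hΦ hq)
  rw [Multiset.count_add] at h
  rw [← h]
  congr 1
  have h2 := Multiset.count_map_eq_count' (c) q.roots cinj ((c) z)
  rw [Complex.conj_conj] at h2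
  exact h2.symm

lemma Wp_pair (hΦ : Φ.Monic) (hnd : Φ.roots.Nodup) (hq : Wp Φ q) :
    ∀ z ∈ q.roots, (c) z ∉ q.roots := by
  intro z hz hcz
  have h1 := Wp_count hΦ hq z
  have h2 : z ∈ Φ.roots := by
    rw [← Wp_key hΦ hq]; exact Multiset.mem_add.mpr (Or.inl hz)
  have h3 := Multiset.nodup_iff_count_le_one.mp hnd z
  have h4 := Multiset.count_pos.mpr hz
  have h5 := Multiset.count_pos.mpr hcz
  omega

lemma Wp_not_real (hΦ : Φ.Monic) (hdeg2 : Φ.natDegree = 2 * m) (hnd : Φ.roots.Nodup)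
    (hm : 0 < m) (hq : Wp Φ q) : ¬ IsRealPoly q := by
  intro h
  rw [isRealPoly_iff] at h
  have hk := Wp_key hΦ hq
  have hr : q.roots.map (c) = q.roots := by rw [← cj_roots, h]
  rw [hr] at hk
  have hcard := Wp_card_roots hΦ hdeg2 hq
  obtain ⟨z, hz⟩ := Multiset.card_pos_iff_exists_mem.mp (by omega : 0 < Multiset.card q.roots)
  have h1 := congrArg (Multiset.count z) hk
  rw [Multiset.count_add] at h1
  have h3 := Multiset.nodup_iff_count_le_one.mp hnd z
  have h4 := Multiset.count_pos.mpr hz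
  omega

lemma Wp_noreal_roots (hΦ : Φ.Monic) (hnd : Φ.roots.Nodup) (hq : Wp Φ q) :
    ∀ z ∈ Φ.roots, (c) z ≠ z := by
  intro z hz heq
  have h1 := Wp_count hΦ hq z
  rw [heq] at h1
  have h2 := Multiset.count_eq_one_of_mem hnd hz
  omega

lemma Wp_one (hΦ : Φ.Monic) (hnd : Φ.roots.Nodup) (hq : Wp Φ q) (hz₀ : z₀ ∈ Φ.roots) :
    (z₀ ∈ q.roots ∧ (c) z₀ ∉ q.roots) ∨ (z₀ ∉ q.roots ∧ (c) z₀ ∈ q.roots) := by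
  have h1 := Wp_count hΦ hq z₀
  have h2 := Multiset.count_eq_one_of_mem hnd hz₀
  by_cases hz : z₀ ∈ q.roots
  · left
    refine ⟨hz, ?_⟩
    have h4 := Multiset.count_pos.mpr hz
    rw [← Multiset.count_eq_zero]
    omega
  · right
    refine ⟨hz, ?_⟩
    rw [← Multiset.count_pos]
    rw [← Multiset.count_eq_zero] at hz
    omega

/-- Toggle the pair `{z₀, conj z₀}` in the root multiset of `q`. -/
def rho (z₀ : ℂ) (q : Polynomial ℂ) : Polynomial ℂ := Pm (tog z₀ q.roots)

lemma rho_roots : (rho z₀ q).roots = tog z₀ q.roots := Pm_roots _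

lemma Wp_rho (hΦ : Φ.Monic) (hnd : Φ.roots.Nodup) (hq : Wp Φ q) (hz₀ : z₀ ∈ Φ.roots) :
    Wp Φ (rho z₀ q) := by
  refine ⟨Pm_monic _, ?_⟩
  have t1 := tog_add_conj (Wp_one hΦ hnd hq hz₀)
  calc Φ = Pm Φ.roots := eq_Pm_roots hΦ
    _ = Pm (tog z₀ q.roots + (tog z₀ q.roots).map (c)) := by rw [t1, Wp_key hΦ hq]
    _ = rho z₀ q * cj (rho z₀ q) := by rw [Pm_add, rho, cj_Pm]

lemma rho_natDegree (hΦ : Φ.Monic) (hdeg2 : Φ.natDegree = 2 * m) (hnd : Φ.roots.Nodup)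
    (hq : Wp Φ q) (hz₀ : z₀ ∈ Φ.roots) : (rho z₀ q).natDegree = m := by
  rw [rho, Pm_natDegree, tog_card (Wp_one hΦ hnd hq hz₀), Wp_card_roots hΦ hdeg2 hq]

lemma rho_rho (hΦ : Φ.Monic) (hnd : Φ.roots.Nodup) (hq : Wp Φ q) (hz₀ : z₀ ∈ Φ.roots) :
    rho z₀ (rho z₀ q) = q := by
  rw [rho, rho_roots, tog_tog (Wp_one hΦ hnd hq hz₀) (Wp_noreal_roots hΦ hnd hq z₀ hz₀)
    (Wp_nodup hΦ hnd hq), ← eq_Pm_roots hq.1]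

lemma rho_ne (hΦ : Φ.Monic) (hnd : Φ.roots.Nodup) (hq : Wp Φ q) (hz₀ : z₀ ∈ Φ.roots) :
    rho z₀ q ≠ q := by
  intro h
  have h2 := congrArg Polynomial.roots h
  rw [rho_roots] at h2
  exact tog_ne (Wp_one hΦ hnd hq hz₀) (Wp_noreal_roots hΦ hnd hq z₀ hz₀)
    (Wp_nodup hΦ hnd hq) h2

lemma rho_ne_cj (hΦ : Φ.Monic) (hdeg2 : Φ.natDegree = 2 * m) (hnd : Φ.roots.Nodup)
    (hm : 1 < m) (hq : Wp Φ q) (hz₀ : z₀ ∈ Φ.roots) : rho z₀ q ≠ cj q := by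
  intro h
  have h2 := congrArg Polynomial.roots h
  rw [rho_roots, cj_roots] at h2
  refine tog_ne_conj (Wp_one hΦ hnd hq hz₀) (Wp_pair hΦ hnd hq) ?_ h2
  rw [Wp_card_roots hΦ hdeg2 hq]
  omega

lemma rho_cj (hΦ : Φ.Monic) (hnd : Φ.roots.Nodup) (hq : Wp Φ q) (hz₀ : z₀ ∈ Φ.roots) :
    rho z₀ (cj q) = cj (rho z₀ q) := by
  rw [rho, cj_roots, ← tog_map_conj (Wp_one hΦ hnd hq hz₀), rho, ← cj_Pm]

end
end NonrealFact

section Main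
open NonrealFact

/-- For a monic real polynomial φ of degree 2m (m > 1) with distinct roots, the
number of ordered factorizations φ = g·h into monic complex polynomials of
degree m each, with not both g and h real, is divisible by 4. -/
theorem nonreal_factorizations_div_four (m : ℕ) (hm : 1 < m)
    (φ : Polynomial ℝ) (hmonic : φ.Monic) (hdeg : φ.natDegree = 2 * m)
    (hnodup : ((φ.map (algebraMap ℝ ℂ)).roots).Nodup) :
    4 ∣ Set.ncard {p : Polynomial ℂ × Polynomial ℂ |
        p.1.Monic ∧ p.2.Monic ∧ p.1.natDegree = m ∧ p.2.natDegree = m ∧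
        φ.map (algebraMap ℝ ℂ) = p.1 * p.2 ∧
        ¬(IsRealPoly p.1 ∧ IsRealPoly p.2)} := by
  classical
  set Φ : Polynomial ℂ := φ.map (algebraMap ℝ ℂ) with hΦdef
  set S : Set (Polynomial ℂ × Polynomial ℂ) := {p | p.1.Monic ∧ p.2.Monic ∧
    p.1.natDegree = m ∧ p.2.natDegree = m ∧ Φ = p.1 * p.2 ∧
    ¬(IsRealPoly p.1 ∧ IsRealPoly p.2)} with hSdef
  have hΦm : Φ.Monic := hmonic.map _
  have hΦne : Φ ≠ 0 := hΦm.ne_zero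
  have hΦdeg : Φ.natDegree = 2 * m := by rw [hΦdef, natDegree_map]; exact hdeg
  have hcjΦ : cj Φ = Φ := by
    rw [hΦdef, cj, Polynomial.map_map]
    congr 1
    exact RingHom.ext fun r => Complex.conj_ofReal r
  have hmem : ∀ p : Polynomial ℂ × Polynomial ℂ, p ∈ S ↔ (p.1.Monic ∧ p.2.Monic ∧
      p.1.natDegree = m ∧ p.2.natDegree = m ∧ Φ = p.1 * p.2 ∧
      ¬(IsRealPoly p.1 ∧ IsRealPoly p.2)) := fun p => Iff.rfl
  have hrootsle : ∀ p ∈ S, p.1.roots + p.2.roots = Φ.roots := by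
    intro p hp
    obtain ⟨h1, h2, h3, h4, h5, h6⟩ := (hmem p).mp hp
    rw [h5, roots_mul (h5 ▸ hΦne)]
  have hsq : ∀ q : Polynomial ℂ, Multiset.card q.roots ≠ 0 → Φ ≠ q * q := by
    intro q hq heq
    have hr : Φ.roots = q.roots + q.roots := by rw [heq, roots_mul (heq ▸ hΦne)]
    obtain ⟨z, hz⟩ := Multiset.card_pos_iff_exists_mem.mp (Nat.pos_of_ne_zero hq)
    have h1 := congrArg (Multiset.count z) hr
    rw [Multiset.count_add] at h1
    have h3 := Multiset.nodup_iff_count_le_one.mp hnodup z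
    have h4 := Multiset.count_pos.mpr hz
    omega
  have hne12 : ∀ p ∈ S, p.1 ≠ p.2 := by
    intro p hp h
    obtain ⟨h1, h2, h3, h4, h5, h6⟩ := (hmem p).mp hp
    refine hsq p.1 ?_ (by rw [h5, h])
    rw [card_roots_eq, h3]
    omega
  have hfin : S.Finite := by
    apply Set.Finite.of_finite_image
      (f := fun p : Polynomial ℂ × Polynomial ℂ => p.1.roots.toFinset)
    · apply Set.Finite.subset (Finset.finite_toSet (Φ.roots.toFinset.powerset))
      rintro _ ⟨p, hp, rfl⟩
      rw [Finset.mem_coe, Finset.mem_powerset]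
      apply Multiset.toFinset_subset.mpr
      apply Multiset.subset_of_le
      rw [← hrootsle p hp]
      exact Multiset.le_add_right _ _
    · intro p hp p' hp' hpe
      have hnod1 : p.1.roots.Nodup := Multiset.nodup_of_le
        (by rw [← hrootsle p hp]; exact Multiset.le_add_right _ _) hnodup
      have hnod2 : p'.1.roots.Nodup := Multiset.nodup_of_le
        (by rw [← hrootsle p' hp']; exact Multiset.le_add_right _ _) hnodup
      have hre : p.1.roots = p'.1.roots := by
        rw [← Multiset.dedup_eq_self.mpr hnod1, ← Multiset.dedup_eq_self.mpr hnod2,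
          ← Multiset.toFinset_val, ← Multiset.toFinset_val]
        exact congrArg Finset.val hpe
      have h1 : p.1 = p'.1 := by
        rw [eq_Pm_roots ((hmem p).mp hp).1, eq_Pm_roots ((hmem p').mp hp').1, hre]
      have h2 : p.2 = p'.2 := by
        apply mul_left_cancel₀ ((hmem p).mp hp).1.ne_zero
        rw [← ((hmem p).mp hp).2.2.2.2.1, h1, ← ((hmem p').mp hp').2.2.2.2.1]
      exact Prod.ext h1 h2
  have hSswap : ∀ p ∈ S, Prod.swap p ∈ S := by
    intro p hp
    obtain ⟨h1, h2, h3, h4, h5, h6⟩ := (hmem p).mp hp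
    exact ⟨h2, h1, h4, h3, by show Φ = p.2 * p.1; rw [h5, mul_comm], fun hh => h6 ⟨hh.2, hh.1⟩⟩
  have hScj : ∀ p ∈ S, (cj p.1, cj p.2) ∈ S := by
    intro p hp
    obtain ⟨h1, h2, h3, h4, h5, h6⟩ := (hmem p).mp hp
    refine ⟨cj_monic h1, cj_monic h2, by rw [cj_natDegree, h3], by rw [cj_natDegree, h4],
      ?_, fun hh => h6 ⟨(real_cj_iff p.1).mp hh.1, (real_cj_iff p.2).mp hh.2⟩⟩
    rw [← cj_mul, ← h5, hcjΦ]
  set T : Set (Polynomial ℂ × Polynomial ℂ) := {p | p ∈ S ∧ p.2 = cj p.1} with hTdef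
  have hTS : T ⊆ S := fun p hp => hp.1
  have hTfin : T.Finite := hfin.subset hTS
  have hUfin : (S \ T).Finite := hfin.diff
  have hsplit : (S \ T).ncard + T.ncard = S.ncard :=
    Set.ncard_diff_add_ncard_of_subset hTS hfin
  rw [← hsplit]
  apply dvd_add
  · -- the part away from the self-conjugate factorizations
    rw [Set.ncard_eq_toFinset_card _ hUfin]
    apply quad_card Prod.swap (fun p : Polynomial ℂ × Polynomial ℂ => (cj p.1, cj p.2))
    · intro p hp
      rw [Set.Finite.mem_toFinset] at hp ⊢
      obtain ⟨hpS, hpT⟩ := hp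
      refine ⟨hSswap p hpS, fun hT => hpT ⟨hpS, ?_⟩⟩
      have e : p.1 = cj p.2 := hT.2
      rw [e, cj_cj]
    · intro p hp
      rw [Set.Finite.mem_toFinset] at hp ⊢
      obtain ⟨hpS, hpT⟩ := hp
      refine ⟨hScj p hpS, fun hT => hpT ⟨hpS, ?_⟩⟩
      exact cj_inj hT.2
    · intro p _; exact Prod.swap_swap p
    · intro p _
      show (cj (cj p.1), cj (cj p.2)) = p
      rw [cj_cj, cj_cj]
    · intro p _; rfl
    · intro p hp h
      rw [Set.Finite.mem_toFinset] at hp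
      exact hne12 p hp.1 (congrArg Prod.fst h).symm
    · intro p hp h
      rw [Set.Finite.mem_toFinset] at hp
      have e1 : cj p.1 = p.1 := congrArg Prod.fst h
      have e2 : cj p.2 = p.2 := congrArg Prod.snd h
      exact ((hmem p).mp hp.1).2.2.2.2.2
        ⟨(isRealPoly_iff p.1).mpr e1, (isRealPoly_iff p.2).mpr e2⟩
    · intro p hp h
      rw [Set.Finite.mem_toFinset] at hp
      have e : cj p.1 = p.2 := congrArg Prod.snd h
      exact hp.2 ⟨hp.1, e.symm⟩
  · -- the self-conjugate part
    rcases T.eq_empty_or_nonempty with hTe | ⟨p₀, hp₀⟩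
    · rw [hTe]; simp
    have hp₀S : p₀ ∈ S := hp₀.1
    have hW0 : Wp Φ p₀.1 := ⟨((hmem p₀).mp hp₀S).1, by
      rw [((hmem p₀).mp hp₀S).2.2.2.2.1, hp₀.2]⟩
    have hRcard : Multiset.card Φ.roots = 2 * m := by rw [card_roots_eq, hΦdeg]
    have hpos : 0 < Multiset.card Φ.roots := by omega
    obtain ⟨z₀, hz₀⟩ := Multiset.card_pos_iff_exists_mem.mp hpos
    have hWT : ∀ p ∈ T, Wp Φ p.1 ∧ Wp Φ p.2 ∧ p.2 = cj p.1 := by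
      intro p hp
      have hW1 : Wp Φ p.1 := ⟨((hmem p).mp hp.1).1, by
        rw [((hmem p).mp hp.1).2.2.2.2.1, hp.2]⟩
      exact ⟨hW1, by rw [hp.2]; exact Wp_cj hW1, hp.2⟩
    have hm0 : 0 < m := by omega
    rw [Set.ncard_eq_toFinset_card _ hTfin]
    apply quad_card Prod.swap (fun p : Polynomial ℂ × Polynomial ℂ => (rho z₀ p.1, rho z₀ p.2))
    · intro p hp
      rw [Set.Finite.mem_toFinset] at hp ⊢
      refine ⟨hSswap p hp.1, ?_⟩
      show p.1 = cj p.2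
      rw [hp.2, cj_cj]
    · intro p hp
      rw [Set.Finite.mem_toFinset] at hp ⊢
      obtain ⟨hW1, hW2, hcjp⟩ := hWT p hp
      have hr2 : rho z₀ p.2 = cj (rho z₀ p.1) := by
        rw [hcjp, rho_cj hΦm hnodup hW1 hz₀]
      refine ⟨(hmem _).mpr ⟨(Wp_rho hΦm hnodup hW1 hz₀).1, (Wp_rho hΦm hnodup hW2 hz₀).1,
        rho_natDegree hΦm hΦdeg hnodup hW1 hz₀, rho_natDegree hΦm hΦdeg hnodup hW2 hz₀,
        ?_, fun hh => Wp_not_real hΦm hΦdeg hnodup hm0 (Wp_rho hΦm hnodup hW1 hz₀) hh.1⟩, hr2⟩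
      rw [hr2]
      exact (Wp_rho hΦm hnodup hW1 hz₀).2
    · intro p _; exact Prod.swap_swap p
    · intro p hp
      rw [Set.Finite.mem_toFinset] at hp
      obtain ⟨hW1, hW2, hcjp⟩ := hWT p hp
      show (rho z₀ (rho z₀ p.1), rho z₀ (rho z₀ p.2)) = p
      rw [rho_rho hΦm hnodup hW1 hz₀, rho_rho hΦm hnodup hW2 hz₀]
    · intro p _; rfl
    · intro p hp h
      rw [Set.Finite.mem_toFinset] at hp
      exact hne12 p hp.1 (congrArg Prod.fst h).symm
    · intro p hp h
      rw [Set.Finite.mem_toFinset] at hp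
      obtain ⟨hW1, hW2, hcjp⟩ := hWT p hp
      exact rho_ne hΦm hnodup hW1 hz₀ (congrArg Prod.fst h)
    · intro p hp h
      rw [Set.Finite.mem_toFinset] at hp
      obtain ⟨hW1, hW2, hcjp⟩ := hWT p hp
      have e : rho z₀ p.2 = p.1 := congrArg Prod.fst h
      have hr2 : rho z₀ p.2 = cj (rho z₀ p.1) := by
        rw [hcjp, rho_cj hΦm hnodup hW1 hz₀]
      rw [hr2] at e
      have e2 : rho z₀ p.1 = cj p.1 := by rw [← cj_cj (rho z₀ p.1), e]
      exact rho_ne_cj hΦm hΦdeg hnodup hm hW1 hz₀ e2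

end Main
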